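/- Let κ > 1 and let ρ > 1 satisfy ρ − ln ρ = 1 + ln κ; define v : [0,1] → ℝ by v(x) = κ·x for 0 ≤ x ≤ 1/(κρ) and v(x) = 1 + (ln x)/ρ for 1/(κρ) ≤ x ≤ 1. Then ρ ≥ 1 + ln κ, and for every price p > 0 and every x* ∈ [0,1] maximizing z ↦ v(z) − p·z over [0,1], the revenue satisfies p·x* ≤ 1/ρ. Since v(1) = 1, any linear pricing recovers at most a 1/(1 + ln κ) fraction of the buyer's full value for the item. -/
import Mathlib


/-- For κ > 1 and ρ > 1 with ρ − ln ρ = 1 + ln κ and the valuation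
v(x) = κx on [0, 1/(κρ)], v(x) = 1 + (ln x)/ρ on [1/(κρ), 1]: we have ρ ≥ 1 + ln κ, and for
every price p > 0 and every utility maximizer x* ∈ [0,1], the revenue satisfies
p·x* ≤ 1/ρ ≤ 1/(1 + ln κ), i.e. linear pricing recovers at most a 1/(1 + ln κ) fraction of
the buyer's full value v(1) = 1. -/
theorem stmt_16 (κ ρ : ℝ) (hκ : 1 < κ) (hρ : 1 < ρ)
    (hρκ : ρ - Real.log ρ = 1 + Real.log κ)
    (v : ℝ → ℝ)
    (hv : ∀ x, v x = if x ≤ 1 / (κ * ρ) then κ * x else 1 + Real.log x / ρ) :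
    1 + Real.log κ ≤ ρ ∧
    ∀ p : ℝ, 0 < p → ∀ xstar ∈ Set.Icc (0:ℝ) 1,
      (∀ z ∈ Set.Icc (0:ℝ) 1, v z - p * z ≤ v xstar - p * xstar) →
      p * xstar ≤ 1 / ρ ∧ p * xstar ≤ 1 / (1 + Real.log κ) := by
  have hκ0 : (0:ℝ) < κ := by linarith
  have hρ0 : (0:ℝ) < ρ := by linarith
  have ha : (0:ℝ) < 1 / (κ * ρ) := by positivity
  have hlogρ : 0 ≤ Real.log ρ := Real.log_nonneg hρ.le
  have h1 : 1 + Real.log κ ≤ ρ := by linarith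
  have hlκ : 0 < 1 + Real.log κ := by
    have := Real.log_nonneg hκ.le; linarith
  refine ⟨h1, ?_⟩
  intro p hp xstar hx hmax
  obtain ⟨hx0, hx1⟩ := hx
  have key : p * xstar ≤ 1 / ρ := by
    rcases le_or_gt xstar (1 / (κ * ρ)) with hcase | hcase
    · -- small branch: p x* ≤ κ x* ≤ κ a = 1/ρ
      have h0 := hmax 0 ⟨le_refl 0, by norm_num⟩
      rw [hv 0, hv xstar, if_pos ha.le, if_pos hcase] at h0
      have hk1 : p * xstar ≤ κ * xstar := by linarith
      have hk2 : κ * xstar ≤ κ * (1 / (κ * ρ)) :=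
        mul_le_mul_of_nonneg_left hcase hκ0.le
      have hk3 : κ * (1 / (κ * ρ)) = 1 / ρ := by field_simp
      linarith
    · by_contra hcon
      push_neg at hcon
      have hxρ : 1 / (p * ρ) < xstar := by
        rw [div_lt_iff₀ (by positivity)]
        nlinarith [(div_lt_iff₀ hρ0).mp hcon]
      set z : ℝ := max ((1 / (κ * ρ) + xstar) / 2) ((1 / (p * ρ) + xstar) / 2) with hz_def
      have hzx : z < xstar := max_lt (by linarith) (by linarith)
      have hza : 1 / (κ * ρ) < z :=
        lt_of_lt_of_le (by linarith) (le_max_left _ _)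
      have hzp : 1 / (p * ρ) < z :=
        lt_of_lt_of_le (by linarith) (le_max_right _ _)
      have hz0 : 0 < z := lt_trans ha hza
      have hzmem : z ∈ Set.Icc (0:ℝ) 1 := ⟨hz0.le, by linarith⟩
      have hmz := hmax z hzmem
      rw [hv z, hv xstar, if_neg (not_le.2 hza), if_neg (not_le.2 hcase)] at hmz
      -- multiply by ρ
      have hm := mul_le_mul_of_nonneg_left hmz hρ0.le
      have e2 : ρ * (1 + Real.log z / ρ - p * z) = ρ + Real.log z - ρ * (p * z) := by
        field_simp
      have e3 : ρ * (1 + Real.log xstar / ρ - p * xstar)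
          = ρ + Real.log xstar - ρ * (p * xstar) := by
        field_simp
      rw [e2, e3] at hm
      have hlog : Real.log xstar - Real.log z ≤ (xstar - z) / z := by
        have h4 : Real.log (xstar / z) ≤ xstar / z - 1 :=
          Real.log_le_sub_one_of_pos (div_pos (lt_trans ha hcase) hz0)
        rw [Real.log_div (by linarith) hz0.ne'] at h4
        have h5 : xstar / z - 1 = (xstar - z) / z := by field_simp
        linarith
      -- ρ p (x* - z) ≤ (x* - z)/z
      have h6 : ρ * (p * (xstar - z)) ≤ (xstar - z) / z := by
        have : ρ * (p * (xstar - z)) = ρ * (p * xstar) - ρ * (p * z) := by ring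
        linarith
      have h7 := mul_le_mul_of_nonneg_left h6 hz0.le
      have e4 : z * ((xstar - z) / z) = xstar - z := by field_simp
      rw [e4] at h7
      have hpz1 : 1 < p * ρ * z := by
        rw [div_lt_iff₀ (by positivity)] at hzp
        nlinarith
      nlinarith [mul_pos (sub_pos.2 hpz1) (sub_pos.2 hzx)]
  refine ⟨key, key.trans ?_⟩
  exact one_div_le_one_div_of_le hlκ h1
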